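/- Let C₁ > 0, R ≥ 1, and 0 < δ ≤ 1/C₁. Suppose v : ℝ² → ℝ is continuous on {x : |x| ≥ R}, twice continuously differentiable on {x : |x| > R}, satisfies |v(x)| ≤ δ for all |x| ≥ R, and |Δv(x) − v(x)| ≤ C₁ δ² for all |x| > R. Then for every x with |x| ≥ R one has |v(x)| ≤ δ(1 − C₁δ) e^{R − |x|} + C₁ δ². -/

import Mathlib

open MeasureTheory Filter Set RealInnerProductSpace

set_option maxHeartbeats 2000000

/-- The Euclidean Laplacian on `ℝ²`: the sum of the two pure second partial derivatives. -/
noncomputable def lap2 (f : EuclideanSpace ℝ (Fin 2) → ℝ) (x : EuclideanSpace ℝ (Fin 2)) : ℝ :=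
  ∑ i : Fin 2, iteratedFDeriv ℝ 2 f x ![EuclideanSpace.single i 1, EuclideanSpace.single i 1]

section Aux

/-- 1-D second derivative test (necessary condition). -/
lemma deriv2_nonpos_of_isLocalMax {g : ℝ → ℝ} (hmax : IsLocalMax g 0)
    (hd : ∀ᶠ t in nhds (0:ℝ), DifferentiableAt ℝ g t)
    (hd2 : DifferentiableAt ℝ (deriv g) 0) :
    deriv (deriv g) 0 ≤ 0 := by
  by_contra hK
  push_neg at hK
  set K := deriv (deriv g) 0 with hKdef
  have hp0 : deriv g 0 = 0 := hmax.deriv_eq_zero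
  have hslope : Tendsto (slope (deriv g) 0) (nhdsWithin 0 {(0:ℝ)}ᶜ) (nhds K) :=
    hasDerivAt_iff_tendsto_slope.1 hd2.hasDerivAt
  have hpos : ∀ᶠ t in nhdsWithin (0:ℝ) {(0:ℝ)}ᶜ, 0 < slope (deriv g) 0 t :=
    hslope.eventually (eventually_gt_nhds hK)
  rw [eventually_nhdsWithin_iff, Metric.eventually_nhds_iff] at hpos
  obtain ⟨ε1, hε1, h1⟩ := hpos
  rw [Metric.eventually_nhds_iff] at hd
  obtain ⟨ε2, hε2, h2⟩ := hd
  have hmax' := hmax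
  rw [IsLocalMax, IsMaxFilter, Metric.eventually_nhds_iff] at hmax'
  obtain ⟨ε3, hε3, h3⟩ := hmax'
  set t := min ε1 (min ε2 ε3) / 2 with ht
  have ht0 : 0 < t := by positivity
  have htε1 : t < ε1 := by
    have : min ε1 (min ε2 ε3) ≤ ε1 := min_le_left _ _
    have h := lt_min hε1 (lt_min hε2 hε3)
    simp only [ht]; linarith
  have htε2 : t < ε2 := by
    have : min ε1 (min ε2 ε3) ≤ ε2 := le_trans (min_le_right _ _) (min_le_left _ _)
    have h := lt_min hε1 (lt_min hε2 hε3)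
    simp only [ht]; linarith
  have htε3 : t < ε3 := by
    have : min ε1 (min ε2 ε3) ≤ ε3 := le_trans (min_le_right _ _) (min_le_right _ _)
    have h := lt_min hε1 (lt_min hε2 hε3)
    simp only [ht]; linarith
  have hcont : ContinuousOn g (Icc 0 t) := by
    intro y hy
    have : DifferentiableAt ℝ g y := by
      apply h2; rw [Real.dist_eq]
      have := hy.1; have := hy.2
      rw [abs_lt]; constructor <;> linarith
    exact this.continuousAt.continuousWithinAt
  have hdiff : DifferentiableOn ℝ g (Ioo 0 t) := by
    intro y hy
    have : DifferentiableAt ℝ g y := by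
      apply h2; rw [Real.dist_eq]
      have := hy.1; have := hy.2
      rw [abs_lt]; constructor <;> linarith
    exact this.differentiableWithinAt
  obtain ⟨c, hc, hceq⟩ := exists_deriv_eq_slope g ht0 hcont hdiff
  have hgt : g t ≤ g 0 := by
    apply h3; rw [Real.dist_eq, sub_zero, abs_of_nonneg ht0.le]; exact htε3
  have hc_le : deriv g c ≤ 0 := by
    rw [hceq]; apply div_nonpos_of_nonpos_of_nonneg <;> [linarith; linarith]
  have hc_pos : 0 < slope (deriv g) 0 c := by
    apply h1
    · rw [Real.dist_eq, sub_zero, abs_of_nonneg hc.1.le]; linarith [hc.2]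
    exact Set.mem_compl_singleton_iff.2 (ne_of_gt hc.1)
  rw [slope_def_field, hp0, sub_zero, sub_zero] at hc_pos
  have : 0 < deriv g c := by
    have := mul_pos hc_pos hc.1
    rwa [div_mul_cancel₀] at this
    exact ne_of_gt hc.1
  linarith

variable {E : Type*} [NormedAddCommGroup E] [NormedSpace ℝ E]

/-- At an interior local max of a C² function, second directional derivatives are ≤ 0. -/
lemma fderiv2_nonpos_of_isLocalMax {h : E → ℝ} {s : Set E} (hs : IsOpen s)
    (hC2 : ContDiffOn ℝ 2 h s) {x : E} (hx : x ∈ s) (hmax : IsLocalMax h x) (e : E) :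
    fderiv ℝ (fderiv ℝ h) x e e ≤ 0 := by
  set ℓ : ℝ → E := fun t => x + t • e with hℓ
  have hℓ0 : ℓ 0 = x := by simp [hℓ]
  have hℓd : ∀ t, HasDerivAt ℓ e t := fun t => by
    convert ((hasDerivAt_id t).smul_const e).const_add x using 1 <;> simp [hℓ]
  have hℓc : Continuous ℓ := by continuity
  have hev : ∀ᶠ t in nhds (0:ℝ), ℓ t ∈ s := by
    have : Tendsto ℓ (nhds 0) (nhds x) := hℓ0 ▸ (hℓc.continuousAt (x := (0:ℝ)))
    exact this.eventually (hs.eventually_mem hx)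
  set g : ℝ → ℝ := fun t => h (ℓ t) with hg
  have hgmax : IsLocalMax g 0 := by
    have hT : Tendsto ℓ (nhds 0) (nhds x) := hℓ0 ▸ (hℓc.continuousAt (x := (0:ℝ)))
    have h2 := hT.eventually hmax
    unfold IsLocalMax IsMaxFilter
    simpa [hg, hℓ0] using h2
  have hdiff : ∀ y ∈ s, DifferentiableAt ℝ h y := fun y hy =>
    (hC2.contDiffAt (hs.mem_nhds hy)).differentiableAt two_ne_zero
  have hgd : ∀ᶠ t in nhds (0:ℝ), HasDerivAt g (fderiv ℝ h (ℓ t) e) t := by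
    filter_upwards [hev] with t ht
    exact ((hdiff _ ht).hasFDerivAt.comp_hasDerivAt t (hℓd t))
  have hgd' : ∀ᶠ t in nhds (0:ℝ), DifferentiableAt ℝ g t := by
    filter_upwards [hgd] with t ht using ht.differentiableAt
  have hderiv_eq : ∀ᶠ t in nhds (0:ℝ), deriv g t = fderiv ℝ h (ℓ t) e := by
    filter_upwards [hgd] with t ht using ht.deriv
  have hf2 : DifferentiableAt ℝ (fderiv ℝ h) x := by
    have : ContDiffAt ℝ 2 h x := hC2.contDiffAt (hs.mem_nhds hx)
    have := this.fderiv_right (m := 1) (le_refl _)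
    exact this.differentiableAt one_ne_zero
  have hq : HasDerivAt (fun t => fderiv ℝ h (ℓ t) e) (fderiv ℝ (fderiv ℝ h) x e e) 0 := by
    have h1 : HasDerivAt (fun t => fderiv ℝ h (ℓ t)) (fderiv ℝ (fderiv ℝ h) x e) 0 := by
      have hfx : HasFDerivAt (fderiv ℝ h) (fderiv ℝ (fderiv ℝ h) x) (ℓ 0) := hℓ0 ▸ hf2.hasFDerivAt
      exact hfx.comp_hasDerivAt 0 (hℓd 0)
    exact (ContinuousLinearMap.apply ℝ ℝ e).hasFDerivAt.comp_hasDerivAt 0 h1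
  have hdg2 : HasDerivAt (deriv g) (fderiv ℝ (fderiv ℝ h) x e e) 0 := by
    apply HasDerivAt.congr_of_eventuallyEq hq
    exact hderiv_eq
  have := deriv2_nonpos_of_isLocalMax hgmax hgd' hdg2.differentiableAt
  rwa [hdg2.deriv] at this

/-- first derivative of `F ∘ L` for a scalar CLM `L`. -/
lemma hasFDerivAt_scalar_comp {F F' : ℝ → ℝ} (hF : ∀ s, HasDerivAt F (F' s) s)
    (L : E →L[ℝ] ℝ) (y : E) :
    HasFDerivAt (fun x => F (L x)) ((F' (L y)) • (L : E →L[ℝ] ℝ)) y := by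
  have := (hF (L y)).comp_hasFDerivAt y L.hasFDerivAt
  exact this

lemma hasFDerivAt_scalar_comp2 {F' F'' : ℝ → ℝ} (hF' : ∀ s, HasDerivAt F' (F'' s) s)
    (L : E →L[ℝ] ℝ) (y : E) :
    HasFDerivAt (fun x => (F' (L x)) • (L : E →L[ℝ] ℝ))
      (((F'' (L y)) • (L : E →L[ℝ] ℝ)).smulRight (L : E →L[ℝ] ℝ)) y :=
  (hasFDerivAt_scalar_comp hF' L y).smul_const (L : E →L[ℝ] ℝ)

lemma half_le_cosh (t : ℝ) : (1 + |t|) / 2 ≤ Real.cosh t := by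
  rw [Real.cosh_eq]
  rcases abs_cases t with ⟨h, _⟩ | ⟨h, _⟩ <;> rw [h] <;>
    nlinarith [Real.add_one_le_exp t, Real.add_one_le_exp (-t),
      Real.exp_nonneg t, Real.exp_nonneg (-t)]

end Aux

section OneSided

local notation "E2" => EuclideanSpace ℝ (Fin 2)

lemma norm_le_abs_add_abs (y : E2) : ‖y‖ ≤ |y 0| + |y 1| := by
  have h : ‖y‖ = Real.sqrt (‖y 0‖^2 + ‖y 1‖^2) := by
    rw [EuclideanSpace.norm_eq, Fin.sum_univ_two]
  rw [h]
  have h2 : ‖y 0‖^2 + ‖y 1‖^2 ≤ (|y 0| + |y 1|)^2 := by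
    simp only [Real.norm_eq_abs]
    nlinarith [abs_nonneg (y 0), abs_nonneg (y 1)]
  calc Real.sqrt (‖y 0‖^2 + ‖y 1‖^2) ≤ Real.sqrt ((|y 0| + |y 1|)^2) :=
        Real.sqrt_le_sqrt h2
    _ = |y 0| + |y 1| := Real.sqrt_sq (by positivity)

/-- One-sided barrier estimate. -/
lemma one_sided (C₁ R δ : ℝ) (hC₁ : 0 < C₁) (hR : 1 ≤ R) (hδ0 : 0 < δ) (hδ : δ ≤ 1 / C₁)
    (v : E2 → ℝ)
    (hcont : ContinuousOn v {x | R ≤ ‖x‖})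
    (hC2 : ContDiffOn ℝ 2 v {x | R < ‖x‖})
    (hb : ∀ x, R ≤ ‖x‖ → |v x| ≤ δ)
    (heq : ∀ x, R < ‖x‖ → |lap2 v x - v x| ≤ C₁ * δ ^ 2) :
    ∀ x, R ≤ ‖x‖ →
      v x ≤ δ * (1 - C₁ * δ) * Real.exp (R - ‖x‖) + C₁ * δ ^ 2 := by
  intro x₀ hx₀
  have hsOpen : IsOpen {y : E2 | R < ‖y‖} := isOpen_lt continuous_const continuous_norm
  have hx0pos : 0 < ‖x₀‖ := lt_of_lt_of_le (by linarith) hx₀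
  set u : E2 := ‖x₀‖⁻¹ • x₀ with hu_def
  have hu : ‖u‖ = 1 := by
    rw [hu_def, norm_smul, norm_inv, norm_norm, inv_mul_cancel₀ (ne_of_gt hx0pos)]
  set L : E2 →L[ℝ] ℝ := innerSL ℝ u with hL_def
  set L0 : E2 →L[ℝ] ℝ := innerSL ℝ (EuclideanSpace.single 0 (1:ℝ)) with hL0_def
  set L1 : E2 →L[ℝ] ℝ := innerSL ℝ (EuclideanSpace.single 1 (1:ℝ)) with hL1_def
  have hLx₀ : L x₀ = ‖x₀‖ := by
    rw [hL_def]
    simp only [innerSL_apply_apply, hu_def]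
    rw [real_inner_smul_left, real_inner_self_eq_norm_sq]
    field_simp
  have hLle : ∀ y : E2, |L y| ≤ ‖y‖ := by
    intro y
    have := abs_real_inner_le_norm u y
    simpa [hL_def, hu] using this
  have hL0y : ∀ y : E2, L0 y = y 0 := by
    intro y; simp [hL0_def, EuclideanSpace.inner_single_left]
  have hL1y : ∀ y : E2, L1 y = y 1 := by
    intro y; simp [hL1_def, EuclideanSpace.inner_single_left]
  set a : ℝ := δ * (1 - C₁ * δ) * Real.exp R with ha_def
  set b : ℝ := C₁ * δ ^ 2 with hb_def
  have hC₁δ : C₁ * δ ≤ 1 := by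
    rw [div_eq_mul_inv, one_mul] at hδ
    calc C₁ * δ ≤ C₁ * C₁⁻¹ := by
          apply mul_le_mul_of_nonneg_left hδ hC₁.le
      _ = 1 := mul_inv_cancel₀ (ne_of_gt hC₁)
  have ha : 0 ≤ a := by
    apply mul_nonneg (mul_nonneg hδ0.le (by linarith)) (Real.exp_nonneg R)
  have hbpos : 0 < b := by positivity
  -- the goal equals v x₀ ≤ a * exp (−‖x₀‖) + b
  have hgoal_eq : δ * (1 - C₁ * δ) * Real.exp (R - ‖x₀‖) + C₁ * δ ^ 2
      = a * Real.exp (-‖x₀‖) + b := by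
    rw [ha_def, hb_def, Real.exp_sub, Real.exp_neg]; ring
  rw [hgoal_eq]
  -- the barrier functions
  set φ : E2 → ℝ := fun y => Real.cosh (L0 y) + Real.cosh (L1 y) with hφ_def
  have hφ2 : ∀ y, 2 ≤ φ y := by
    intro y
    have := Real.one_le_cosh (L0 y)
    have := Real.one_le_cosh (L1 y)
    simp only [hφ_def]; linarith
  have hφnorm : ∀ y : E2, ‖y‖ / 2 ≤ φ y := by
    intro y
    have h0 := half_le_cosh (L0 y)
    have h1 := half_le_cosh (L1 y)
    have h2 := norm_le_abs_add_abs y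
    rw [hL0y] at h0; rw [hL1y] at h1
    simp only [hφ_def, hL0y, hL1y]
    linarith
  -- main claim: for every ε > 0, v x₀ ≤ a exp(−L x₀) + b + ε φ x₀
  have main : ∀ ε : ℝ, 0 < ε → v x₀ ≤ a * Real.exp (-(L x₀)) + b + ε * φ x₀ := by
    intro ε hε
    -- the supersolution W and its derivatives
    set W : E2 → ℝ := fun y =>
      a * Real.exp (-(L y)) + ε * Real.cosh (L0 y) + ε * Real.cosh (L1 y) + b with hW_def
    -- scalar models
    have hF1 : ∀ s : ℝ, HasDerivAt (fun s => a * Real.exp (-s)) (-(a * Real.exp (-s))) s := by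
      intro s
      have h := ((Real.hasDerivAt_exp (-s)).comp s (hasDerivAt_neg s)).const_mul a
      exact h.congr_deriv (by ring)
    have hF1' : ∀ s : ℝ, HasDerivAt (fun s => -(a * Real.exp (-s))) (a * Real.exp (-s)) s := by
      intro s
      have h := (hF1 s).neg
      exact h.congr_deriv (by ring)
    have hF2 : ∀ s : ℝ, HasDerivAt (fun s => ε * Real.cosh s) (ε * Real.sinh s) s :=
      fun s => (Real.hasDerivAt_cosh s).const_mul ε
    have hF2' : ∀ s : ℝ, HasDerivAt (fun s => ε * Real.sinh s) (ε * Real.cosh s) s :=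
      fun s => (Real.hasDerivAt_sinh s).const_mul ε
    -- first derivative of W
    set P : E2 → (E2 →L[ℝ] ℝ) := fun y =>
      (-(a * Real.exp (-(L y)))) • (L : E2 →L[ℝ] ℝ) + (ε * Real.sinh (L0 y)) • (L0 : E2 →L[ℝ] ℝ)
        + (ε * Real.sinh (L1 y)) • (L1 : E2 →L[ℝ] ℝ) with hP_def
    have hW1 : ∀ y, HasFDerivAt W (P y) y := by
      intro y
      exact (((hasFDerivAt_scalar_comp hF1 L y).add
        (hasFDerivAt_scalar_comp hF2 L0 y)).add
        (hasFDerivAt_scalar_comp hF2 L1 y)).add_const b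
    have hfW : fderiv ℝ W = P := funext fun y => (hW1 y).fderiv
    -- second derivative of W
    set D : E2 → (E2 →L[ℝ] (E2 →L[ℝ] ℝ)) := fun y =>
      ((a * Real.exp (-(L y))) • (L : E2 →L[ℝ] ℝ)).smulRight (L : E2 →L[ℝ] ℝ)
        + ((ε * Real.cosh (L0 y)) • (L0 : E2 →L[ℝ] ℝ)).smulRight (L0 : E2 →L[ℝ] ℝ)
        + ((ε * Real.cosh (L1 y)) • (L1 : E2 →L[ℝ] ℝ)).smulRight (L1 : E2 →L[ℝ] ℝ) with hD_def
    have hW2 : ∀ y, HasFDerivAt P (D y) y := by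
      intro y
      exact ((hasFDerivAt_scalar_comp2 hF1' L y).add
        (hasFDerivAt_scalar_comp2 hF2' L0 y)).add
        (hasFDerivAt_scalar_comp2 hF2' L1 y)
    -- smoothness of W
    have hWsmooth : ContDiff ℝ 2 W := by
      apply ContDiff.add
      apply ContDiff.add
      apply ContDiff.add
      · exact contDiff_const.mul (Real.contDiff_exp.comp (L.contDiff.neg))
      · exact contDiff_const.mul (Real.contDiff_cosh.comp L0.contDiff)
      · exact contDiff_const.mul (Real.contDiff_cosh.comp L1.contDiff)
      · exact contDiff_const
    -- W ≥ b
    have hWb : ∀ y, b + ε * φ y ≤ W y := by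
      intro y
      have h0 : 0 ≤ a * Real.exp (-(L y)) := mul_nonneg ha (Real.exp_nonneg _)
      have e1 : W y = a * Real.exp (-(L y)) + ε * Real.cosh (L0 y) + ε * Real.cosh (L1 y) + b := rfl
      have e2 : φ y = Real.cosh (L0 y) + Real.cosh (L1 y) := rfl
      have e3 : ε * (Real.cosh (L0 y) + Real.cosh (L1 y))
          = ε * Real.cosh (L0 y) + ε * Real.cosh (L1 y) := by ring
      rw [e1, e2, e3]; linarith
    set h : E2 → ℝ := fun y => v y - W y with hh_def
    -- the maximum of h over the exterior region
    set K : Set E2 := {y | R ≤ ‖y‖} with hK_def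
    have hhx₀K : x₀ ∈ K := hx₀
    set ρ : ℝ := max ‖x₀‖ (2 * (δ + |h x₀|) / ε) with hρ_def
    have hfar : ∀ y ∈ K, ρ < ‖y‖ → h y ≤ h x₀ := by
      intro y hyK hy
      have h9 : h x₀ = v x₀ - W x₀ := rfl
      have h10 : h y = v y - W y := rfl
      rw [h9, h10]
      have c1 : v y - W y ≤ δ - b - ε * φ y := by
        have := hWb y
        have := le_of_abs_le (hb y hyK)
        linarith
      have c3 : δ + |h x₀| < ε * φ y := by
        have h4 : 2 * (δ + |h x₀|) / ε < ‖y‖ := lt_of_le_of_lt (le_max_right _ _) hy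
        rw [div_lt_iff₀ hε] at h4
        have h6 : ε * (‖y‖ / 2) ≤ ε * φ y := mul_le_mul_of_nonneg_left (hφnorm y) hε.le
        calc δ + |h x₀| < ‖y‖ * ε / 2 := by linarith
          _ = ε * (‖y‖ / 2) := by ring
          _ ≤ ε * φ y := h6
      have c4 : -|h x₀| ≤ v x₀ - W x₀ := h9 ▸ neg_abs_le _
      linarith
    have hKclosed : IsClosed K := isClosed_le continuous_const continuous_norm
    set A : Set E2 := K ∩ Metric.closedBall 0 ρ with hA_def
    have hAcompact : IsCompact A :=
      (isCompact_closedBall (0:E2) ρ).of_isClosed_subset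
        (hKclosed.inter Metric.isClosed_closedBall) inter_subset_right
    have hx₀A : x₀ ∈ A := by
      constructor
      · exact hhx₀K
      · rw [Metric.mem_closedBall, dist_zero_right]
        exact le_max_left _ _
    have hhcont : ContinuousOn h A := by
      apply ContinuousOn.sub
      · exact hcont.mono (fun y hy => hy.1)
      · exact hWsmooth.continuous.continuousOn
    obtain ⟨z, hzA, hzmax⟩ := hAcompact.exists_isMaxOn ⟨x₀, hx₀A⟩ hhcont
    have hzK : z ∈ K := hzA.1
    -- z is a global max of h on K
    have hglobal : ∀ y ∈ K, h y ≤ h z := by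
      intro y hyK
      by_cases hc : ‖y‖ ≤ ρ
      · exact hzmax ⟨hyK, by rwa [Metric.mem_closedBall, dist_zero_right]⟩
      · push_neg at hc
        exact le_trans (hfar y hyK hc) (hzmax hx₀A)
    -- h z ≤ 0
    have hz0 : h z ≤ 0 := by
      rcases eq_or_lt_of_le (show R ≤ ‖z‖ from hzK) with hR_eq | hR_lt
      · -- boundary case
        have hWz : δ ≤ W z := by
          have h1 : -(L z) ≥ -R := by
            have := hLle z
            rw [← hR_eq] at this
            have := le_of_abs_le this
            linarith
          have h2 : a * Real.exp (-R) ≤ a * Real.exp (-(L z)) :=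
            mul_le_mul_of_nonneg_left (Real.exp_le_exp.2 h1) ha
          have h3 : a * Real.exp (-R) = δ * (1 - C₁ * δ) := by
            rw [ha_def, mul_assoc, ← Real.exp_add]
            simp
          have h4 : 0 ≤ ε * Real.cosh (L0 z) :=
            mul_nonneg hε.le (le_trans one_pos.le (Real.one_le_cosh _))
          have h5 : 0 ≤ ε * Real.cosh (L1 z) :=
            mul_nonneg hε.le (le_trans one_pos.le (Real.one_le_cosh _))
          have e1 : W z = a * Real.exp (-(L z)) + ε * Real.cosh (L0 z)
              + ε * Real.cosh (L1 z) + b := rfl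
          have e2 : δ * (1 - C₁ * δ) + C₁ * δ ^ 2 = δ := by ring
          rw [e1]
          simp only [hb_def]
          linarith
        have h1 : v z ≤ δ := le_of_abs_le (hb z hzK)
        have h2 : h z = v z - W z := rfl
        rw [h2]; linarith
      · -- interior case: second derivative test
        have hzs : z ∈ {y : E2 | R < ‖y‖} := hR_lt
        have hC2h : ContDiffOn ℝ 2 h {y : E2 | R < ‖y‖} :=
          hC2.sub (hWsmooth.contDiffOn)
        have hlocmax : IsLocalMax h z := by
          filter_upwards [hsOpen.eventually_mem hzs] with y hy
          exact hglobal y (le_of_lt hy)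
        -- decompose second derivative of h
        have hv_diff_at : ∀ y ∈ {y : E2 | R < ‖y‖}, DifferentiableAt ℝ v y := fun y hy =>
          (hC2.contDiffAt (hsOpen.mem_nhds hy)).differentiableAt two_ne_zero
        have heps : fderiv ℝ h =ᶠ[nhds z] fun y => fderiv ℝ v y - P y := by
          filter_upwards [hsOpen.eventually_mem hzs] with y hy
          have h1 : fderiv ℝ h y = fderiv ℝ v y - fderiv ℝ W y :=
            fderiv_sub (hv_diff_at y hy) (hW1 y).differentiableAt
          rw [h1, hfW]
        have hdv2 : DifferentiableAt ℝ (fderiv ℝ v) z := by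
          have hcd : ContDiffAt ℝ 2 v z := hC2.contDiffAt (hsOpen.mem_nhds hzs)
          exact (hcd.fderiv_right (m := 1) (le_refl _)).differentiableAt one_ne_zero
        have h2nd : HasFDerivAt (fun y => fderiv ℝ v y - P y)
            (fderiv ℝ (fderiv ℝ v) z - D z) z :=
          hdv2.hasFDerivAt.sub (hW2 z)
        have hfd_eq : fderiv ℝ (fderiv ℝ h) z = fderiv ℝ (fderiv ℝ v) z - D z := by
          rw [heps.fderiv_eq]; exact h2nd.fderiv
        -- second derivative test applied coordinatewise
        have hkey : ∀ i : Fin 2,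
            fderiv ℝ (fderiv ℝ h) z (EuclideanSpace.single i 1) (EuclideanSpace.single i 1) ≤ 0 :=
          fun i => fderiv2_nonpos_of_isLocalMax hsOpen hC2h hzs hlocmax _
        -- compute lap2 identities
        have hlapv : lap2 v z = ∑ i : Fin 2,
            fderiv ℝ (fderiv ℝ v) z (EuclideanSpace.single i 1) (EuclideanSpace.single i 1) := by
          unfold lap2
          congr 1; funext i
          rw [iteratedFDeriv_two_apply]
          simp
        -- evaluate D z on the basis
        have hDval : ∀ i : Fin 2, D z (EuclideanSpace.single i 1) (EuclideanSpace.single i 1)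
            = a * Real.exp (-(L z)) * (L (EuclideanSpace.single i 1))^2
              + ε * Real.cosh (L0 z) * (L0 (EuclideanSpace.single i 1))^2
              + ε * Real.cosh (L1 z) * (L1 (EuclideanSpace.single i 1))^2 := by
          intro i
          simp only [hD_def, ContinuousLinearMap.add_apply,
            ContinuousLinearMap.smulRight_apply, ContinuousLinearMap.coe_smul',
            Pi.smul_apply, smul_eq_mul]
          ring
        have hLsum : (L (EuclideanSpace.single 0 1))^2 + (L (EuclideanSpace.single 1 1))^2 = 1 := by
          have h1 : ∀ i : Fin 2, L (EuclideanSpace.single i 1) = u i := by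
            intro i
            simp [hL_def, EuclideanSpace.inner_single_right]
          have h2 : (inner ℝ u u : ℝ) = ‖u‖ ^ 2 := real_inner_self_eq_norm_sq u
          rw [hu] at h2
          have h3 : (inner ℝ u u : ℝ) = u 0 * u 0 + u 1 * u 1 := by
            rw [PiLp.inner_apply, Fin.sum_univ_two]
            norm_num [RCLike.inner_apply, conj_trivial]
            ring
          rw [h3] at h2
          rw [h1 0, h1 1, pow_two, pow_two]
          simpa using h2
        have hL0val : L0 (EuclideanSpace.single 0 1) = 1 ∧ L0 (EuclideanSpace.single 1 1) = 0 := by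
          constructor <;> simp [hL0_def, EuclideanSpace.inner_single_right,
            EuclideanSpace.single_apply]
        have hL1val : L1 (EuclideanSpace.single 0 1) = 0 ∧ L1 (EuclideanSpace.single 1 1) = 1 := by
          constructor <;> simp [hL1_def, EuclideanSpace.inner_single_right,
            EuclideanSpace.single_apply]
        -- assemble: lap2 v z ≤ sum of D z values
        have hsum : lap2 v z ≤ a * Real.exp (-(L z)) + ε * Real.cosh (L0 z)
            + ε * Real.cosh (L1 z) := by
          have hst : ∀ i : Fin 2,
              fderiv ℝ (fderiv ℝ v) z (EuclideanSpace.single i 1) (EuclideanSpace.single i 1)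
              ≤ D z (EuclideanSpace.single i 1) (EuclideanSpace.single i 1) := by
            intro i
            have := hkey i
            rw [hfd_eq] at this
            simp only [ContinuousLinearMap.sub_apply, ContinuousLinearMap.coe_sub',
              Pi.sub_apply] at this
            linarith
          have hsum2 : lap2 v z ≤ ∑ i : Fin 2,
              D z (EuclideanSpace.single i 1) (EuclideanSpace.single i 1) := by
            rw [hlapv]
            exact Finset.sum_le_sum (fun i _ => hst i)
          rw [Fin.sum_univ_two, hDval 0, hDval 1, hL0val.1, hL0val.2, hL1val.1, hL1val.2] at hsum2
          calc lap2 v z ≤ _ := hsum2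
            _ = a * Real.exp (-(L z)) * ((L (EuclideanSpace.single 0 1))^2
                  + (L (EuclideanSpace.single 1 1))^2) + ε * Real.cosh (L0 z)
                  + ε * Real.cosh (L1 z) := by ring
            _ = _ := by rw [hLsum]; ring
        -- combine with the PDE inequality
        have hpde := heq z hR_lt
        have hpde' : v z - C₁ * δ ^ 2 ≤ lap2 v z := by
          have := abs_le.1 hpde
          linarith [this.1]
        have e1 : h z = v z - W z := rfl
        have e2 : W z = a * Real.exp (-(L z)) + ε * Real.cosh (L0 z)
            + ε * Real.cosh (L1 z) + b := rfl
        have e3 : b = C₁ * δ ^ 2 := rfl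
        rw [e1, e2]
        linarith
    -- conclude
    have hfinal : h x₀ ≤ 0 := le_trans (hglobal x₀ hhx₀K) hz0
    have e1 : h x₀ = v x₀ - W x₀ := rfl
    have e2 : W x₀ = a * Real.exp (-(L x₀)) + ε * Real.cosh (L0 x₀)
        + ε * Real.cosh (L1 x₀) + b := rfl
    have e3 : φ x₀ = Real.cosh (L0 x₀) + Real.cosh (L1 x₀) := rfl
    have e4 : ε * (Real.cosh (L0 x₀) + Real.cosh (L1 x₀))
        = ε * Real.cosh (L0 x₀) + ε * Real.cosh (L1 x₀) := by ring
    rw [e1, e2] at hfinal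
    rw [e3, e4]
    linarith
  -- let ε → 0
  have hconc : v x₀ ≤ a * Real.exp (-(L x₀)) + b := by
    apply le_of_forall_pos_le_add
    intro ε' hε'
    have hφx₀ : (0:ℝ) < φ x₀ := lt_of_lt_of_le two_pos (hφ2 x₀)
    have := main (ε' / φ x₀) (by positivity)
    calc v x₀ ≤ a * Real.exp (-(L x₀)) + b + ε' / φ x₀ * φ x₀ := this
      _ = a * Real.exp (-(L x₀)) + b + ε' := by
          rw [div_mul_cancel₀ _ (ne_of_gt hφx₀)]
  rwa [hLx₀] at hconc

end OneSided

/-- Barrier estimate: if `|v| ≤ δ` on `{|x| ≥ R}` and `|Δv − v| ≤ C₁δ²` there, then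
`|v(x)| ≤ δ(1 − C₁δ) e^{R−|x|} + C₁δ²`. -/
theorem stmt_2 (C₁ R δ : ℝ) (hC₁ : 0 < C₁) (hR : 1 ≤ R) (hδ0 : 0 < δ) (hδ : δ ≤ 1 / C₁)
    (v : EuclideanSpace ℝ (Fin 2) → ℝ)
    (hcont : ContinuousOn v {x | R ≤ ‖x‖})
    (hC2 : ContDiffOn ℝ 2 v {x | R < ‖x‖})
    (hb : ∀ x, R ≤ ‖x‖ → |v x| ≤ δ)
    (heq : ∀ x, R < ‖x‖ → |lap2 v x - v x| ≤ C₁ * δ ^ 2) :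
    ∀ x, R ≤ ‖x‖ →
      |v x| ≤ δ * (1 - C₁ * δ) * Real.exp (R - ‖x‖) + C₁ * δ ^ 2 := by
  intro x hx
  have hpos := one_sided C₁ R δ hC₁ hR hδ0 hδ v hcont hC2 hb heq x hx
  have hlapneg : ∀ z, lap2 (-v) z = - lap2 v z := by
    intro z
    unfold lap2
    rw [← Finset.sum_neg_distrib]
    congr 1; funext i
    rw [iteratedFDeriv_neg_apply]
    simp
  have hneg := one_sided C₁ R δ hC₁ hR hδ0 hδ (-v)
    (hcont.neg) (hC2.neg)
    (fun y hy => by rw [Pi.neg_apply, abs_neg]; exact hb y hy)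
    (fun y hy => by
      rw [hlapneg y, Pi.neg_apply]
      have := heq y hy
      rw [show -lap2 v y - -v y = -(lap2 v y - v y) by ring, abs_neg]
      exact this) x hx
  rw [Pi.neg_apply] at hneg
  rw [abs_le]
  constructor
  · linarith
  · exact hpos
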